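/- Let a, b be nonzero real numbers with ab > 0 and a ≠ b, and let f(x,y) = x²/a + y²/b. Then the set of umbilic points of the elliptic paraboloid z = f(x,y), i.e. the set of (x,y) ∈ ℝ² satisfying ((1+f_y²)·f_xx − 2·f_x·f_y·f_xy + (1+f_x²)·f_yy)² = 4·(1+f_x²+f_y²)·(f_xx·f_yy − f_xy²), has exactly two elements. -/

import Mathlib

/-- Partial derivative of `f` in the first variable. -/
noncomputable def fx (f : ℝ → ℝ → ℝ) (x y : ℝ) : ℝ := deriv (fun t => f t y) x

/-- Partial derivative of `f` in the second variable. -/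
noncomputable def fy (f : ℝ → ℝ → ℝ) (x y : ℝ) : ℝ := deriv (fun t => f x t) y

/-- Second partial derivative `f_xx`. -/
noncomputable def fxx (f : ℝ → ℝ → ℝ) (x y : ℝ) : ℝ := deriv (fun t => fx f t y) x

/-- Second partial derivative `f_xy`. -/
noncomputable def fxy (f : ℝ → ℝ → ℝ) (x y : ℝ) : ℝ := deriv (fun t => fx f x t) y

/-- Second partial derivative `f_yy`. -/
noncomputable def fyy (f : ℝ → ℝ → ℝ) (x y : ℝ) : ℝ := deriv (fun t => fy f x t) y

/-- `(x,y)` is an umbilic point of the graph `z = f(x,y)`: the two principal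
curvatures coincide there. -/
def IsUmbilic (f : ℝ → ℝ → ℝ) (x y : ℝ) : Prop :=
  ((1 + fy f x y ^ 2) * fxx f x y - 2 * fx f x y * fy f x y * fxy f x y
      + (1 + fx f x y ^ 2) * fyy f x y) ^ 2
    = 4 * (1 + fx f x y ^ 2 + fy f x y ^ 2)
        * (fxx f x y * fyy f x y - fxy f x y ^ 2)

lemma quad_iff_aux (c x : ℝ) (hc : 0 < c) :
    4*x^2 = c ↔ x = Real.sqrt c/2 ∨ x = -(Real.sqrt c/2) := by
  have h : (Real.sqrt c/2)^2 = c/4 := by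
    rw [div_pow, Real.sq_sqrt hc.le]; norm_num
  constructor
  · intro h4
    have : x^2 = (Real.sqrt c/2)^2 := by rw [h]; linarith
    rcases sq_eq_sq_iff_eq_or_eq_neg.1 this with h' | h' <;> [left; right] <;> simp [h']
  · rintro (h' | h') <;> rw [h'] <;> nlinarith [h]

/-- The elliptic paraboloid `z = x²/a + y²/b` with `ab > 0`, `a ≠ b` has exactly
two umbilic points. -/
theorem elliptic_paraboloid_two_umbilics (a b : ℝ) (ha : a ≠ 0) (hb : b ≠ 0)
    (hab : 0 < a * b) (hne : a ≠ b) :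
    {q : ℝ × ℝ | IsUmbilic (fun x y => x ^ 2 / a + y ^ 2 / b) q.1 q.2}.ncard = 2 := by
  have hfx : ∀ x y : ℝ, fx (fun x y => x ^ 2 / a + y ^ 2 / b) x y = 2*x/a := fun x y => by
    simp [fx, deriv_add_const, deriv_div_const, mul_comm]
  have hfy : ∀ x y : ℝ, fy (fun x y => x ^ 2 / a + y ^ 2 / b) x y = 2*y/b := fun x y => by
    simp [fy, deriv_const_add, deriv_div_const, mul_comm]
  have hfxx : ∀ x y : ℝ, fxx (fun x y => x ^ 2 / a + y ^ 2 / b) x y = 2/a := fun x y => by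
    have h : (fun t => fx (fun x y => x ^ 2 / a + y ^ 2 / b) t y) = fun t => 2*t/a := by
      funext t; exact hfx t y
    rw [fxx, h]; simp [mul_div_assoc, deriv_const_mul_field]; ring
  have hfxy : ∀ x y : ℝ, fxy (fun x y => x ^ 2 / a + y ^ 2 / b) x y = 0 := fun x y => by
    have h : (fun t => fx (fun x y => x ^ 2 / a + y ^ 2 / b) x t) = fun _ => 2*x/a := by
      funext t; exact hfx x t
    rw [fxy, h]; simp
  have hfyy : ∀ x y : ℝ, fyy (fun x y => x ^ 2 / a + y ^ 2 / b) x y = 2/b := fun x y => by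
    have h : (fun t => fy (fun x y => x ^ 2 / a + y ^ 2 / b) x t) = fun t => 2*t/b := by
      funext t; exact hfy x t
    rw [fyy, h]; simp [mul_div_assoc, deriv_const_mul_field]; ring
  have habne : (4:ℝ)*a^5*b^5 ≠ 0 := by
    simp [pow_eq_zero_iff, ha, hb]
  have hset : {q : ℝ × ℝ | IsUmbilic (fun x y => x ^ 2 / a + y ^ 2 / b) q.1 q.2}
      = {q : ℝ × ℝ | (q.2 = 0 ∧ 4*q.1^2 = a*(b-a)) ∨ (q.1 = 0 ∧ 4*q.2^2 = b*(a-b))} := by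
    ext ⟨x, y⟩
    simp only [Set.mem_setOf_eq, IsUmbilic, hfx, hfy, hfxx, hfxy, hfyy]
    have keyiff : (((1 + (2*y/b) ^ 2) * (2/a) - 2 * (2*x/a) * (2*y/b) * 0
          + (1 + (2*x/a) ^ 2) * (2/b)) ^ 2
        = 4 * (1 + (2*x/a) ^ 2 + (2*y/b) ^ 2) * ((2/a) * (2/b) - 0 ^ 2))
        ↔ ((a*b^2 + 4*a*y^2 - a^2*b - 4*b*x^2)^2 + 64*(a*b)*(x*y)^2 = 0) := by
      constructor
      · intro h
        have key4 : ((a*b^2 + 4*a*y^2 - a^2*b - 4*b*x^2)^2 + 64*(a*b)*(x*y)^2) * (4*a^5*b^5) = 0 := by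
          field_simp at h
          linear_combination a^5*b^5*h
        exact (mul_eq_zero.1 key4).resolve_right habne
      · intro hk
        field_simp
        linear_combination 4 * hk
    rw [keyiff]
    constructor
    · intro hk
      have hP : a*b^2 + 4*a*y^2 - a^2*b - 4*b*x^2 = 0 := by
        have h2 : (a*b^2 + 4*a*y^2 - a^2*b - 4*b*x^2)^2 = 0 := by
          nlinarith [mul_nonneg hab.le (sq_nonneg (x*y)), sq_nonneg (a*b^2 + 4*a*y^2 - a^2*b - 4*b*x^2)]
        exact pow_eq_zero_iff (by norm_num) |>.1 h2
      have hxy : x * y = 0 := by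
        have h64 : 64*(a*b) * (x*y)^2 = 0 := by
          linear_combination hk - (a*b^2 + 4*a*y^2 - a^2*b - 4*b*x^2)*hP
        have h2 : (x*y)^2 = 0 :=
          (mul_eq_zero.1 h64).resolve_left (ne_of_gt (by nlinarith))
        exact pow_eq_zero_iff (by norm_num) |>.1 h2
      rcases mul_eq_zero.1 hxy with hx0 | hy0
      · right
        refine ⟨hx0, ?_⟩
        subst hx0
        exact mul_left_cancel₀ ha (show a * (4*y^2) = a * (b*(a-b)) by linear_combination hP)
      · left
        refine ⟨hy0, ?_⟩
        subst hy0
        exact mul_left_cancel₀ hb (show b * (4*x^2) = b * (a*(b-a)) by linear_combination -hP)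
    · rintro (⟨hy0, hx⟩ | ⟨hx0, hy⟩)
      · subst hy0; linear_combination (b^2*(4*x^2 - a*(b-a))) * hx
      · subst hx0; linear_combination (a^2*(4*y^2 - b*(a-b))) * hy
  rw [hset]
  have hprod : (a*(b-a)) * (b*(a-b)) < 0 := by
    nlinarith [mul_pos hab (mul_self_pos.2 (sub_ne_zero.2 hne))]
  rcases lt_or_ge 0 (a*(b-a)) with hc1 | hc1
  · have hc2 : b*(a-b) < 0 := by nlinarith
    have hs : Real.sqrt (a*(b-a)) > 0 := Real.sqrt_pos.2 hc1
    have : {q : ℝ × ℝ | (q.2 = 0 ∧ 4*q.1^2 = a*(b-a)) ∨ (q.1 = 0 ∧ 4*q.2^2 = b*(a-b))}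
        = {(Real.sqrt (a*(b-a))/2, 0), (-(Real.sqrt (a*(b-a))/2), 0)} := by
      ext ⟨x, y⟩
      simp only [Set.mem_setOf_eq, Set.mem_insert_iff, Set.mem_singleton_iff, Prod.mk.injEq]
      constructor
      · rintro (⟨hy0, hx⟩ | ⟨hx0, hy⟩)
        · rcases (quad_iff_aux _ x hc1).1 hx with h' | h' <;> [left; right] <;> exact ⟨h', hy0⟩
        · nlinarith [sq_nonneg y]
      · rintro (⟨hx', hy'⟩ | ⟨hx', hy'⟩) <;> exact Or.inl ⟨hy', (quad_iff_aux _ x hc1).2 (by tauto)⟩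
    rw [this]
    exact Set.ncard_pair (by intro h; have h1 := congrArg Prod.fst h; simp at h1; nlinarith)
  · have hc1' : a*(b-a) < 0 := by
      rcases lt_or_eq_of_le hc1 with h | h
      · exact h
      · exfalso; rw [h] at hprod; simp at hprod
    have hc2 : 0 < b*(a-b) := by nlinarith
    have hs : Real.sqrt (b*(a-b)) > 0 := Real.sqrt_pos.2 hc2
    have : {q : ℝ × ℝ | (q.2 = 0 ∧ 4*q.1^2 = a*(b-a)) ∨ (q.1 = 0 ∧ 4*q.2^2 = b*(a-b))}
        = {(0, Real.sqrt (b*(a-b))/2), (0, -(Real.sqrt (b*(a-b))/2))} := by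
      ext ⟨x, y⟩
      simp only [Set.mem_setOf_eq, Set.mem_insert_iff, Set.mem_singleton_iff, Prod.mk.injEq]
      constructor
      · rintro (⟨hy0, hx⟩ | ⟨hx0, hy⟩)
        · nlinarith [sq_nonneg x]
        · rcases (quad_iff_aux _ y hc2).1 hy with h' | h' <;> [left; right] <;> exact ⟨hx0, h'⟩
      · rintro (⟨hx', hy'⟩ | ⟨hx', hy'⟩) <;> exact Or.inr ⟨hx', (quad_iff_aux _ y hc2).2 (by tauto)⟩
    rw [this]
    exact Set.ncard_pair (by intro h; have h2 := congrArg Prod.snd h; simp at h2; nlinarith)
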